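/- Let n ∈ ℤ with α_n² ≥ k², so that β_n = i·√(α_n² − κ²) is purely imaginary. Then k²·(α_n² − κ²) − γ²·α_n² = (k² − γ²)·(α_n² − k²) ≥ 0, and for every θ ∈ ℂ with Re θ ≥ 0 the Hermitian matrix Re(θ·M_n) is positive semidefinite, i.e. Re(θ · ((M_n ξ) · ξ̄)) ≥ 0 for all ξ ∈ ℂ². -/
import Mathlib


open Real Matrix

set_option maxHeartbeats 1600000

/-- With the conical diffraction parameters, let n ∈ ℤ with
α_n² ≥ k², so β_n = i·√(α_n² − κ²) is purely imaginary. Then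
k²·(α_n² − κ²) − γ²·α_n² = (k² − γ²)·(α_n² − k²) ≥ 0, and for every θ ∈ ℂ with
Re θ ≥ 0 the matrix Re(θ·M_n) is positive semidefinite, i.e.
Re(θ·((M_n ξ)·ξ̄)) ≥ 0 for all ξ ∈ ℂ². -/
theorem stmt_5 (ω ε μ θ φ : ℝ) (hω : 0 < ω) (hε : 0 < ε) (hμ : 0 < μ)
    (hθ : θ ∈ Set.Ioo (-(π / 2)) (π / 2)) (hφ : φ ∈ Set.Ioo (-(π / 2)) (π / 2))
    (k γ κ2 : ℝ)
    (hk : k = ω * Real.sqrt (ε * μ)) (hγ : γ = k * Real.sin φ)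
    (hκ2 : κ2 = k ^ 2 * Real.cos φ ^ 2)
    (n : ℤ) (an : ℝ) (han : an = (n : ℝ) + k * Real.sin θ * Real.cos φ)
    (hge : k ^ 2 ≤ an ^ 2)
    (bn : ℂ) (hbn : bn = Complex.I * ((Real.sqrt (an ^ 2 - κ2) : ℝ) : ℂ)) :
    k ^ 2 * (an ^ 2 - κ2) - γ ^ 2 * an ^ 2 = (k ^ 2 - γ ^ 2) * (an ^ 2 - k ^ 2) ∧
    0 ≤ (k ^ 2 - γ ^ 2) * (an ^ 2 - k ^ 2) ∧
    ∀ θc : ℂ, 0 ≤ θc.re → ∀ ξ : Fin 2 → ℂ,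
      0 ≤ (θc * (Matrix.mulVec
          ((κ2 : ℂ)⁻¹ • !![-Complex.I * ((ω * ε : ℝ) : ℂ) * bn,
              Complex.I * (γ : ℂ) * (an : ℂ);
              -(Complex.I * (γ : ℂ) * (an : ℂ)),
              -Complex.I * ((ω * μ : ℝ) : ℂ) * bn]) ξ
        ⬝ᵥ star ξ)).re := by
  have hpy : Real.sin φ ^ 2 + Real.cos φ ^ 2 = 1 := Real.sin_sq_add_cos_sq φ
  have hcos : 0 < Real.cos φ := Real.cos_pos_of_mem_Ioo hφ
  have hkpos : 0 < k := by
    rw [hk]; exact mul_pos hω (Real.sqrt_pos.2 (mul_pos hε hμ))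
  have hκpos : 0 < κ2 := by rw [hκ2]; positivity
  have hγκ : k ^ 2 - γ ^ 2 = κ2 := by
    rw [hγ, hκ2]; linear_combination -(k ^ 2) * hpy
  have hκle : κ2 ≤ k ^ 2 := by
    nlinarith [hγκ, sq_nonneg γ]
  have hk2 : k ^ 2 = ω ^ 2 * (ε * μ) := by
    rw [hk, mul_pow, sq_sqrt (mul_pos hε hμ).le]
  refine ⟨by linear_combination k ^ 2 * hγκ,
    by nlinarith [mul_nonneg hκpos.le (sub_nonneg.2 hge)], ?_⟩
  intro θc ht ξ
  set s := Real.sqrt (an^2 - κ2) with hs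
  have hs2 : s ^ 2 = an ^ 2 - κ2 := Real.sq_sqrt (by linarith)
  have hs0 : 0 ≤ s := Real.sqrt_nonneg _
  have hkey : γ ^ 2 * an ^ 2 ≤ k ^ 2 * s ^ 2 := by
    have h1 : k ^ 2 * (an ^ 2 - κ2) - γ ^ 2 * an ^ 2 = κ2 * (an ^ 2 - k ^ 2) := by
      linear_combination an ^ 2 * hγκ
    nlinarith [mul_nonneg hκpos.le (sub_nonneg.2 hge)]
  have hM : ((κ2 : ℂ)⁻¹ • !![-Complex.I * ((ω * ε : ℝ) : ℂ) * bn,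
              Complex.I * (γ : ℂ) * (an : ℂ);
              -(Complex.I * (γ : ℂ) * (an : ℂ)),
              -Complex.I * ((ω * μ : ℝ) : ℂ) * bn])
      = !![((ω*ε*s/κ2 : ℝ) : ℂ), Complex.I * ((γ*an/κ2 : ℝ) : ℂ);
           -(Complex.I * ((γ*an/κ2 : ℝ) : ℂ)), ((ω*μ*s/κ2 : ℝ) : ℂ)] := by
    ext i j
    fin_cases i <;> fin_cases j <;>
      simp [hbn, Complex.ext_iff, div_eq_mul_inv] <;> ring
  rw [hM]
  set x1 := (ξ 0).re; set y1 := (ξ 0).im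
  set x2 := (ξ 1).re; set y2 := (ξ 1).im
  have h2wC : 2 * (γ*an) * (x1*y2 - y1*x2) ≤
      (ω*ε*s) * (x1^2+y1^2) + (ω*μ*s) * (x2^2+y2^2) := by
    have huv : (γ*an)^2 ≤ (ω*ε*s) * (ω*μ*s) := by
      calc (γ*an)^2 = γ^2*an^2 := by ring
        _ ≤ k^2*s^2 := hkey
        _ = (ω*ε*s) * (ω*μ*s) := by rw [hk2]; ring
    have hu : 0 ≤ ω*ε*s := by positivity
    have hv : 0 ≤ ω*μ*s := by positivity
    have hS : 0 ≤ (ω*ε*s) * (x1^2+y1^2) + (ω*μ*s) * (x2^2+y2^2) := by positivity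
    have hST : (2 * (γ*an) * (x1*y2 - y1*x2))^2
        ≤ ((ω*ε*s) * (x1^2+y1^2) + (ω*μ*s) * (x2^2+y2^2))^2 := by
      nlinarith [sq_nonneg ((ω*ε*s)*(x1^2+y1^2) - (ω*μ*s)*(x2^2+y2^2)),
        mul_nonneg (mul_nonneg hu hv) (sq_nonneg (x1*x2 + y1*y2)),
        mul_nonneg (sub_nonneg.2 huv) (sq_nonneg (x1*y2 - y1*x2))]
    nlinarith [hST, hS]
  have hQ : 0 ≤ (ω*ε*s/κ2) * (x1^2+y1^2) + (ω*μ*s/κ2) * (x2^2+y2^2)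
      - 2 * (γ*an/κ2) * (x1*y2 - y1*x2) := by
    have heq : (ω*ε*s/κ2) * (x1^2+y1^2) + (ω*μ*s/κ2) * (x2^2+y2^2)
        - 2 * (γ*an/κ2) * (x1*y2 - y1*x2)
        = ((ω*ε*s) * (x1^2+y1^2) + (ω*μ*s) * (x2^2+y2^2)
          - 2 * (γ*an) * (x1*y2 - y1*x2)) * κ2⁻¹ := by ring
    rw [heq]
    exact mul_nonneg (by linarith) (inv_nonneg.2 hκpos.le)
  simp only [Matrix.mulVec, dotProduct, Fin.sum_univ_two,
    Matrix.cons_val', Matrix.cons_val_zero, Matrix.cons_val_one,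
    Matrix.head_cons, Matrix.empty_val', Matrix.cons_val_fin_one,
    Matrix.head_fin_const, Pi.star_apply, RCLike.star_def, Matrix.of_apply]
  simp only [Complex.mul_re, Complex.mul_im, Complex.add_re, Complex.add_im,
    Complex.I_re, Complex.I_im, Complex.ofReal_re, Complex.ofReal_im,
    Complex.neg_re, Complex.neg_im, Complex.conj_re, Complex.conj_im]
  nlinarith [mul_nonneg ht hQ]
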